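/- If N = q^k * n^2 is an odd perfect number in Eulerian form, then I(q^k)^2 < I(n^2), where I(x) = σ(x)/x. -/
import Mathlib


/-- The sum-of-divisors function. -/
def sigma (n : ℕ) : ℕ := ∑ d ∈ n.divisors, d

/-- The abundancy index as a rational number. -/
noncomputable def Iq (x : ℕ) : ℚ := (sigma x : ℚ) / x

/-- The abundancy index as a real number. -/
noncomputable def Ir (x : ℕ) : ℝ := (sigma x : ℝ) / x

lemma sigma_mul {a b : ℕ} (h : Nat.Coprime a b) :
    sigma (a * b) = sigma a * sigma b := h.sum_divisors_mul

lemma sigma_pp (q k : ℕ) (hq : Nat.Prime q) :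
    sigma (q ^ k) = ∑ i ∈ Finset.range (k + 1), q ^ i := by
  unfold sigma
  rw [Nat.sum_divisors_prime_pow hq]

theorem stmt10 (q k n N : ℕ)
    (hq : Nat.Prime q) (hq4 : q % 4 = 1) (hk4 : k % 4 = 1)
    (hco : Nat.Coprime q n) (hN : N = q ^ k * n ^ 2)
    (hodd : Odd N) (hperf : sigma N = 2 * N) :
    (Iq (q ^ k)) ^ 2 < Iq (n ^ 2) := by
  have hn0 : n ≠ 0 := by
    rintro rfl
    rw [hN] at hodd
    simp at hodd
  have hq5 : 5 ≤ q := by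
    have h2 := hq.two_le
    omega
  have hqk0 : (0 : ℚ) < (q : ℚ) ^ k := by positivity
  have hn2q : (0 : ℚ) < ((n : ℚ)) ^ 2 := by
    have : (0:ℚ) < (n:ℚ) := by exact_mod_cast Nat.pos_of_ne_zero hn0
    positivity
  have hcop : Nat.Coprime (q ^ k) (n ^ 2) := Nat.Coprime.pow k 2 hco
  have hmul : (sigma (q ^ k) : ℚ) * (sigma (n ^ 2) : ℚ) = 2 * ((q : ℚ) ^ k * (n : ℚ) ^ 2) := by
    have h := sigma_mul hcop
    rw [hN, h] at hperf
    exact_mod_cast congrArg (fun m : ℕ => (m : ℚ)) hperf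
  set a : ℚ := Iq (q ^ k) with ha
  set b : ℚ := Iq (n ^ 2) with hb
  have hab : a * b = 2 := by
    rw [ha, hb, Iq, Iq]
    push_cast
    field_simp
    linarith [hmul]
  have hs1 : 1 ≤ sigma (q ^ k) := by
    rw [sigma_pp q k hq]
    calc 1 = ∑ i ∈ Finset.range 1, q ^ i := by simp
    _ ≤ _ := Finset.sum_le_sum_of_subset (Finset.range_subset_range.2 (by omega))
  have ha_pos : 0 < a := by
    rw [ha, Iq]
    push_cast
    have : (0:ℚ) < (sigma (q^k) : ℚ) := by exact_mod_cast hs1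
    positivity
  set S : ℚ := (sigma (q ^ k) : ℚ) with hS
  have hgeom : S * ((q : ℚ) - 1) = (q : ℚ) * (q : ℚ) ^ k - 1 := by
    rw [hS, sigma_pp q k hq]
    push_cast
    have := geom_sum_mul (q : ℚ) (k + 1)
    rw [pow_succ, mul_comm ((q:ℚ)^k) (q:ℚ)] at this
    exact this
  have hq5' : (5 : ℚ) ≤ (q : ℚ) := by exact_mod_cast hq5
  have hq1 : (0 : ℚ) < (q : ℚ) - 1 := by linarith
  have hkey : 4 * S < 5 * (q : ℚ) ^ k := by
    nlinarith [hgeom, hq1, hqk0, hq5']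
  have ha54 : a < 5 / 4 := by
    rw [ha, Iq]
    push_cast
    rw [div_lt_div_iff₀ hqk0 (by norm_num : (0:ℚ) < 4)]
    rw [hS] at hkey
    linarith [hkey]
  have ha2 : a ^ 2 < (5/4) ^ 2 := by nlinarith [ha_pos, ha54]
  have ha3 : a ^ 3 < 2 := by nlinarith [ha_pos, ha54, ha2]
  nlinarith [ha_pos, hab, ha3]
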